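/- Fix P ⊆ {1,…,n−1}. Let v, v' ∈ W^P with v ≠ v' and ℓ(v) ≥ ℓ(v'). Then for every w' ∈ W_P the Billey polynomial satisfies σ_v(v'w') = 0. Consequently, the matrix A = (σ_v(v'w')·σ_w(v'w')) with rows indexed by pairs (v,w) ∈ W^P × W_P and columns by pairs (v',w') ∈ W^P × W_P, with rows and columns ordered lexicographically subordinate to the length partial order, is block upper triangular with blocks indexed by pairs (v,v') ∈ W^P × W^P. -/

import Mathlib

noncomputable section

open MvPolynomial
open scoped Classical

/-- The polynomial ring `R = ℂ[x₁, …, xₙ]`. -/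
abbrev BilleyR (n : ℕ) := MvPolynomial (Fin n) ℂ

/-- The simple transposition `sᵢ = (i, i+1)` in the symmetric group on `{1, …, n}`. -/
def sTr (n : ℕ) (i : Fin (n - 1)) : Equiv.Perm (Fin n) :=
  Equiv.swap ⟨i.1, by have := i.isLt; omega⟩ ⟨i.1 + 1, by have := i.isLt; omega⟩

/-- The length `ℓ(w)`: the minimal `k` such that `w` is a product of `k` simple
transpositions. -/
def len (n : ℕ) (w : Equiv.Perm (Fin n)) : ℕ :=
  sInf {k | ∃ l : List (Fin (n - 1)), l.length = k ∧ (l.map (sTr n)).prod = w}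

/-- `l` is a reduced word for `w`: the product of the corresponding simple transpositions
is `w` and the length of `l` is `ℓ(w)`. -/
def IsRedWord (n : ℕ) (l : List (Fin (n - 1))) (w : Equiv.Perm (Fin n)) : Prop :=
  (l.map (sTr n)).prod = w ∧ l.length = len n w

/-- The simple root `αᵢ = xᵢ - x_{i+1}`. -/
def alphaR (n : ℕ) (i : Fin (n - 1)) : BilleyR n :=
  X ⟨i.1, by have := i.isLt; omega⟩ - X ⟨i.1 + 1, by have := i.isLt; omega⟩

/-- Given a word `b = (b₁, …, b_m)`, the polynomial
`r(j, u) = (s_{b₁} ⋯ s_{b_{j-1}})(α_{b_j})` (with `j` zero-indexed here). -/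
def rPoly (n : ℕ) (b : List (Fin (n - 1))) (j : Fin b.length) : BilleyR n :=
  rename (⇑(((b.take j.1).map (sTr n)).prod)) (alphaR n (b.get j))

/-- Billey's formula with respect to the word `b` for `u`:
`σ_v(u) = Σ ∏ₜ r(jₜ, u)`, summed over all strictly increasing index sequences
`j₁ < ⋯ < j_{ℓ(v)}` into `b` such that `s_{b_{j₁}} ⋯ s_{b_{j_{ℓ(v)}}} = v`. -/
def billeyWord (n : ℕ) (b : List (Fin (n - 1))) (v : Equiv.Perm (Fin n)) : BilleyR n :=
  ∑ J ∈ Finset.univ.filter (fun J : Finset (Fin b.length) =>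
      J.card = len n v ∧
        ((J.sort (· ≤ ·)).map (fun j => sTr n (b.get j))).prod = v),
    ∏ j ∈ J, rPoly n b j

/-- The Billey polynomial `σ_v(u)`, computed from a choice of reduced word for `u`
(its value is independent of this choice). -/
def sigma (n : ℕ) (v u : Equiv.Perm (Fin n)) : BilleyR n :=
  if h : ∃ b : List (Fin (n - 1)), IsRedWord n b u then billeyWord n h.choose v else 0

/-- The standard parabolic subgroup `W_P` generated by `{sᵢ : i ∈ P}`. -/
def WPar (n : ℕ) (P : Set (Fin (n - 1))) : Subgroup (Equiv.Perm (Fin n)) :=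
  Subgroup.closure (sTr n '' P)

/-- The set `W^P` of minimal-length coset representatives of `W / W_P`. -/
def minReps (n : ℕ) (P : Set (Fin (n - 1))) : Set (Equiv.Perm (Fin n)) :=
  {v | ∀ u ∈ WPar n P, len n v ≤ len n (v * u)}

namespace BAux
variable {n : ℕ}

def k0 (k : Fin (n-1)) : Fin n := ⟨k.1, by have := k.isLt; omega⟩
def k1 (k : Fin (n-1)) : Fin n := ⟨k.1+1, by have := k.isLt; omega⟩
lemma sTr_eq_swap (k : Fin (n-1)) : sTr n k = Equiv.swap (k0 k) (k1 k) := rfl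
lemma sTr_val (k : Fin (n-1)) (a : Fin n) :
    (sTr n k a).1 = if a.1 = k.1 then k.1+1 else if a.1 = k.1 + 1 then k.1 else a.1 := by
  rw [sTr_eq_swap, Equiv.swap_apply_def]
  split_ifs with h2 h3 h4 h5 h6 <;> simp_all [k0, k1, Fin.ext_iff]
lemma sTr_k0 (k : Fin (n-1)) : sTr n k (k0 k) = k1 k := by
  rw [sTr_eq_swap]; exact Equiv.swap_apply_left _ _
lemma sTr_k1 (k : Fin (n-1)) : sTr n k (k1 k) = k0 k := by
  rw [sTr_eq_swap]; exact Equiv.swap_apply_right _ _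
lemma sTr_sTr (k : Fin (n-1)) (a : Fin n) : sTr n k (sTr n k a) = a := by
  rw [sTr_eq_swap]; exact Equiv.swap_apply_self _ _ _
lemma sTr_apply_of_ne (k : Fin (n-1)) (a : Fin n) (h0 : a ≠ k0 k) (h1 : a ≠ k1 k) :
    sTr n k a = a := by
  rw [sTr_eq_swap]; exact Equiv.swap_apply_of_ne_of_ne h0 h1

/-- rank matrix: number of a < i with w a < j -/
def rk (w : Equiv.Perm (Fin n)) (i j : ℕ) : ℕ :=
  (Finset.univ.filter (fun a : Fin n => a.1 < i ∧ (w a).1 < j)).card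

lemma rk_succ (w : Equiv.Perm (Fin n)) {i : ℕ} (hi : i < n) (j : ℕ) :
    rk w (i+1) j = rk w i j + (if (w ⟨i, hi⟩).1 < j then 1 else 0) := by
  unfold rk
  rw [Finset.card_filter, Finset.card_filter]
  have : ∀ a : Fin n, (if a.1 < i + 1 ∧ (w a).1 < j then 1 else 0)
      = (if a.1 < i ∧ (w a).1 < j then 1 else 0)
        + (if a = ⟨i, hi⟩ then (if (w a).1 < j then 1 else 0) else 0) := by
    intro a
    have : a = ⟨i, hi⟩ ↔ a.1 = i := by simp [Fin.ext_iff]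
    split_ifs <;> simp_all <;> omega
  rw [Finset.sum_congr rfl (fun a _ => this a), Finset.sum_add_distrib,
    Finset.sum_ite_eq' Finset.univ (⟨i, hi⟩ : Fin n)]
  simp

lemma rk_mul_low (w : Equiv.Perm (Fin n)) (k : Fin (n-1)) {i : ℕ} (hi : i ≤ k.1) (j : ℕ) :
    rk (w * sTr n k) i j = rk w i j := by
  unfold rk
  congr 1
  apply Finset.filter_congr
  intro a _
  by_cases ha : a.1 < i
  · have h0 : a ≠ k0 k := by simp [k0, Fin.ext_iff]; omega
    have h1 : a ≠ k1 k := by simp [k1, Fin.ext_iff]; omega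
    simp [Equiv.Perm.mul_apply, sTr_apply_of_ne k a h0 h1, ha]
  · simp [ha]

lemma rk_mul_high (w : Equiv.Perm (Fin n)) (k : Fin (n-1)) {i : ℕ} (hi : k.1 + 2 ≤ i) (j : ℕ) :
    rk (w * sTr n k) i j = rk w i j := by
  unfold rk
  apply Finset.card_bij' (fun a _ => sTr n k a) (fun a _ => sTr n k a)
  · intro a ha
    simp only [Finset.mem_filter, Finset.mem_univ, true_and] at ha ⊢
    constructor
    · have := sTr_val k a
      have hk := k.isLt
      split_ifs at this <;> omega
    · simpa [Equiv.Perm.mul_apply, sTr_sTr] using ha.2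
  · intro a ha
    simp only [Finset.mem_filter, Finset.mem_univ, true_and] at ha ⊢
    constructor
    · have := sTr_val k a
      have hk := k.isLt
      split_ifs at this <;> omega
    · simpa [Equiv.Perm.mul_apply, sTr_sTr] using ha.2
  · intro a _; exact sTr_sTr k a
  · intro a _; exact sTr_sTr k a

lemma k0_lt_n (k : Fin (n-1)) : k.1 < n := by have := k.isLt; omega
lemma k1_lt_n (k : Fin (n-1)) : k.1 + 1 < n := by have := k.isLt; omega

lemma rk_row_k0 (w : Equiv.Perm (Fin n)) (k : Fin (n-1)) (j : ℕ) :
    rk w (k.1+1) j = rk w k.1 j + (if (w (k0 k)).1 < j then 1 else 0) :=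
  rk_succ w (k0_lt_n k) j

lemma rk_row_k1 (w : Equiv.Perm (Fin n)) (k : Fin (n-1)) (j : ℕ) :
    rk w (k.1+2) j = rk w k.1 j + (if (w (k0 k)).1 < j then 1 else 0)
      + (if (w (k1 k)).1 < j then 1 else 0) := by
  have h := rk_succ w (k1_lt_n k) j
  rw [show k.1 + 2 = (k.1 + 1) + 1 from rfl, h, rk_row_k0]
  rfl

lemma rk_mul_mid (w : Equiv.Perm (Fin n)) (k : Fin (n-1)) (j : ℕ) :
    rk (w * sTr n k) (k.1+1) j = rk w k.1 j + (if (w (k1 k)).1 < j then 1 else 0) := by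
  have h := rk_succ (w * sTr n k) (k0_lt_n k) j
  rw [h, rk_mul_low w k (le_refl k.1) j]
  congr 2
  show (((w * sTr n k) (k0 k)).1 < j) = _
  rw [Equiv.Perm.mul_apply, sTr_k0]

/-- `dom v u` means `v ≤ u` in (rank-matrix) Bruhat order. -/
def dom (v u : Equiv.Perm (Fin n)) : Prop := ∀ i j : ℕ, rk u i j ≤ rk v i j

lemma dom_refl (v : Equiv.Perm (Fin n)) : dom v v := fun _ _ => le_refl _

lemma dom_trans {v u w : Equiv.Perm (Fin n)} (h1 : dom v u) (h2 : dom u w) : dom v w :=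
  fun i j => (h2 i j).trans (h1 i j)


lemma fin_lt_val {a b : Fin n} (h : a < b) : a.1 < b.1 := h

lemma dom_mul_self {w : Equiv.Perm (Fin n)} {k : Fin (n-1)}
    (h : w (k0 k) < w (k1 k)) : dom w (w * sTr n k) := by
  intro i j
  rcases lt_trichotomy i (k.1+1) with hi | hi | hi
  · rw [rk_mul_low w k (by omega) j]
  · subst hi
    rw [rk_mul_mid w k j, rk_row_k0 w k j]
    have := fin_lt_val h
    split_ifs <;> omega
  · rw [rk_mul_high w k (by omega) j]

lemma dom_lift_asc {v u : Equiv.Perm (Fin n)} {k : Fin (n-1)} (hd : dom v u)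
    (hu : u (k0 k) < u (k1 k)) : dom (v * sTr n k) (u * sTr n k) := by
  intro i j
  rcases lt_trichotomy i (k.1+1) with hi | hi | hi
  · rw [rk_mul_low v k (by omega) j, rk_mul_low u k (by omega) j]; exact hd i j
  · subst hi
    rw [rk_mul_mid v k j, rk_mul_mid u k j]
    have h1 := hd k.1 j
    have h2 := hd (k.1+2) j
    rw [rk_row_k1 v k j, rk_row_k1 u k j] at h2
    have h3 := fin_lt_val hu
    split_ifs at h2 ⊢ <;> omega
  · rw [rk_mul_high v k (by omega) j, rk_mul_high u k (by omega) j]; exact hd i j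

lemma dom_lift_desc {v u : Equiv.Perm (Fin n)} {k : Fin (n-1)} (hd : dom v u)
    (hu : u (k1 k) < u (k0 k)) (hv : v (k0 k) < v (k1 k)) : dom v (u * sTr n k) := by
  intro i j
  rcases lt_trichotomy i (k.1+1) with hi | hi | hi
  · rw [rk_mul_low u k (by omega) j]; exact hd i j
  · subst hi
    rw [rk_mul_mid u k j, rk_row_k0 v k j]
    have h1 := hd k.1 j
    have h2 := hd (k.1+2) j
    rw [rk_row_k1 v k j, rk_row_k1 u k j] at h2
    have h3 := fin_lt_val hv
    split_ifs at h2 ⊢ <;> omega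
  · rw [rk_mul_high u k (by omega) j]; exact hd i j

lemma dom_lift_desc2 {v u : Equiv.Perm (Fin n)} {k : Fin (n-1)} (hd : dom v u)
    (hv : v (k1 k) < v (k0 k)) : dom (v * sTr n k) (u * sTr n k) := by
  intro i j
  rcases lt_trichotomy i (k.1+1) with hi | hi | hi
  · rw [rk_mul_low v k (by omega) j, rk_mul_low u k (by omega) j]; exact hd i j
  · subst hi
    rw [rk_mul_mid v k j, rk_mul_mid u k j]
    have h1 := hd k.1 j
    have h2 := hd (k.1+2) j
    rw [rk_row_k1 v k j, rk_row_k1 u k j] at h2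
    have h3 := fin_lt_val hv
    split_ifs at h2 ⊢ <;> omega
  · rw [rk_mul_high v k (by omega) j, rk_mul_high u k (by omega) j]; exact hd i j

/-- inversion set -/
def I (w : Equiv.Perm (Fin n)) : Finset (Fin n × Fin n) :=
  Finset.univ.filter (fun p => p.1 < p.2 ∧ w p.2 < w p.1)

def inv (w : Equiv.Perm (Fin n)) : ℕ := (I w).card

lemma mem_I {w : Equiv.Perm (Fin n)} {p : Fin n × Fin n} :
    p ∈ I w ↔ p.1 < p.2 ∧ w p.2 < w p.1 := by simp [I]

lemma sTr_lt (k : Fin (n-1)) {a b : Fin n} (hab : a < b) (hne : ¬(a = k0 k ∧ b = k1 k)) :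
    sTr n k a < sTr n k b := by
  have ha := sTr_val k a; have hb := sTr_val k b
  have h0 : (a = k0 k) ↔ a.1 = k.1 := by simp [k0, Fin.ext_iff]
  have h1 : (b = k1 k) ↔ b.1 = k.1 + 1 := by simp [k1, Fin.ext_iff]
  rw [Fin.lt_def] at hab ⊢
  rw [h0, h1] at hne
  split_ifs at ha hb <;> omega

lemma erase_card_eq (w : Equiv.Perm (Fin n)) (k : Fin (n-1)) :
    ((I (w * sTr n k)).erase (k0 k, k1 k)).card = ((I w).erase (k0 k, k1 k)).card := by
  apply Finset.card_bij' (fun p _ => (sTr n k p.1, sTr n k p.2))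
      (fun p _ => (sTr n k p.1, sTr n k p.2))
  · intro p hp
    rw [Finset.mem_erase, mem_I] at hp ⊢
    obtain ⟨hne, hlt, hinv⟩ := hp
    have hne' : ¬(p.1 = k0 k ∧ p.2 = k1 k) := by
      intro ⟨h1, h2⟩; exact hne (by rw [← h1, ← h2])
    refine ⟨?_, sTr_lt k hlt hne', ?_⟩
    · intro h
      have h1 : p.1 = k1 k := by
        have := congrArg (fun q : Fin n × Fin n => sTr n k q.1) h
        simpa [sTr_sTr, sTr_k0] using this
      have h2 : p.2 = k0 k := by
        have := congrArg (fun q : Fin n × Fin n => sTr n k q.2) h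
        simpa [sTr_sTr, sTr_k1] using this
      rw [h1, h2] at hlt
      exact absurd hlt (by simp [k0, k1, Fin.lt_def])
    · simpa [Equiv.Perm.mul_apply] using hinv
  · intro p hp
    rw [Finset.mem_erase, mem_I] at hp ⊢
    obtain ⟨hne, hlt, hinv⟩ := hp
    have hne' : ¬(p.1 = k0 k ∧ p.2 = k1 k) := by
      intro ⟨h1, h2⟩; exact hne (by rw [← h1, ← h2])
    refine ⟨?_, sTr_lt k hlt hne', ?_⟩
    · intro h
      have h1 : p.1 = k1 k := by
        have := congrArg (fun q : Fin n × Fin n => sTr n k q.1) h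
        simpa [sTr_sTr, sTr_k0] using this
      have h2 : p.2 = k0 k := by
        have := congrArg (fun q : Fin n × Fin n => sTr n k q.2) h
        simpa [sTr_sTr, sTr_k1] using this
      rw [h1, h2] at hlt
      exact absurd hlt (by simp [k0, k1, Fin.lt_def])
    · simpa [Equiv.Perm.mul_apply, sTr_sTr] using hinv
  · intro p _; simp [sTr_sTr]
  · intro p _; simp [sTr_sTr]

lemma k0_lt_k1 (k : Fin (n-1)) : k0 k < k1 k := by simp [k0, k1, Fin.lt_def]

lemma inv_mul_sTr_asc {w : Equiv.Perm (Fin n)} {k : Fin (n-1)}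
    (h : w (k0 k) < w (k1 k)) : inv (w * sTr n k) = inv w + 1 := by
  have hmem : (k0 k, k1 k) ∈ I (w * sTr n k) := by
    rw [mem_I]
    exact ⟨k0_lt_k1 k, by simpa [Equiv.Perm.mul_apply, sTr_k0, sTr_k1] using h⟩
  have hnmem : (k0 k, k1 k) ∉ I w := by
    rw [mem_I]; rintro ⟨-, h2⟩; exact absurd h2 (not_lt.2 h.le)
  have := erase_card_eq w k
  rw [Finset.erase_eq_of_notMem hnmem] at this
  unfold inv
  rw [← this, Finset.card_erase_of_mem hmem]
  have : 0 < (I (w * sTr n k)).card := Finset.card_pos.2 ⟨_, hmem⟩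
  omega

lemma inv_mul_sTr_desc {w : Equiv.Perm (Fin n)} {k : Fin (n-1)}
    (h : w (k1 k) < w (k0 k)) : inv w = inv (w * sTr n k) + 1 := by
  have hmem : (k0 k, k1 k) ∈ I w := mem_I.2 ⟨k0_lt_k1 k, h⟩
  have hnmem : (k0 k, k1 k) ∉ I (w * sTr n k) := by
    rw [mem_I]; rintro ⟨-, h2⟩
    simp only [Equiv.Perm.mul_apply, sTr_k0, sTr_k1] at h2
    exact absurd h2 (not_lt.2 h.le)
  have := erase_card_eq w k
  rw [Finset.erase_eq_of_notMem hnmem] at this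
  unfold inv
  rw [this, Finset.card_erase_of_mem hmem]
  have : 0 < (I w).card := Finset.card_pos.2 ⟨_, hmem⟩
  omega


abbrev piW (n : ℕ) (l : List (Fin (n-1))) : Equiv.Perm (Fin n) := (l.map (sTr n)).prod

lemma piW_append (l : List (Fin (n-1))) (k : Fin (n-1)) :
    piW n (l ++ [k]) = piW n l * sTr n k := by
  simp [piW]

lemma sTr_mul_self (k : Fin (n-1)) : sTr n k * sTr n k = 1 := by
  rw [sTr_eq_swap]; exact Equiv.swap_mul_self _ _

lemma sTr_ne (k : Fin (n-1)) {w : Equiv.Perm (Fin n)} : w (k0 k) ≠ w (k1 k) := by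
  intro h
  have := w.injective h
  simp [k0, k1, Fin.ext_iff] at this

lemma inv_one : inv (1 : Equiv.Perm (Fin n)) = 0 := by
  unfold inv
  rw [Finset.card_eq_zero]
  apply Finset.filter_false_of_mem
  rintro p - ⟨h1, h2⟩
  simp only [Equiv.Perm.one_apply] at h2
  exact absurd h1 (not_lt.2 h2.le)

lemma exists_descent {w : Equiv.Perm (Fin n)} (hw : w ≠ 1) :
    ∃ k : Fin (n-1), w (k1 k) < w (k0 k) := by
  by_contra hc
  push_neg at hc
  have hasc : ∀ k : Fin (n-1), w (k0 k) < w (k1 k) := by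
    intro k
    rcases lt_trichotomy (w (k0 k)) (w (k1 k)) with h | h | h
    · exact h
    · exact absurd h (sTr_ne k)
    · exact absurd h (not_lt.2 (hc k))
  -- w is strictly monotone
  have hasc2 : ∀ a b : Fin n, a.1 + 1 = b.1 → w a < w b := by
    intro a b h
    have hk : a.1 < n - 1 := by have := b.isLt; omega
    have h2 := hasc ⟨a.1, hk⟩
    have e0 : k0 ⟨a.1, hk⟩ = a := Fin.ext rfl
    have e1 : k1 ⟨a.1, hk⟩ = b := Fin.ext (by simp [k1]; omega)
    rwa [e0, e1] at h2
  have hchain : ∀ d : ℕ, ∀ a b : Fin n, a.1 + d = b.1 → 0 < d → w a < w b := by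
    intro d
    induction d with
    | zero => omega
    | succ d ih =>
      intro a b hab _
      rcases Nat.eq_zero_or_pos d with hd | hd
      · exact hasc2 a b (by omega)
      · have hc1 : a.1 + 1 < n := by have := b.isLt; omega
        exact (hasc2 a ⟨a.1+1, hc1⟩ rfl).trans (ih ⟨a.1+1, hc1⟩ b (by simp; omega) hd)
  have hmono : StrictMono w := by
    intro a b hab
    exact hchain (b.1 - a.1) a b (by omega) (by omega)
  have hle : ∀ u : Equiv.Perm (Fin n), StrictMono u → ∀ a : Fin n, a.1 ≤ (u a).1 := by
    intro u hu
    have key : ∀ m : ℕ, ∀ a : Fin n, a.1 = m → m ≤ (u a).1 := by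
      intro m
      induction m with
      | zero => intro a _; omega
      | succ m ih =>
        intro a ha
        have hm : m < n := by omega
        have h1 := ih ⟨m, hm⟩ rfl
        have h2 : u ⟨m, hm⟩ < u a := hu (by simp [Fin.lt_def]; omega)
        rw [Fin.lt_def] at h2
        omega
    intro a; exact key a.1 a rfl
  have hinvmono : StrictMono (w⁻¹ : Equiv.Perm (Fin n)) := by
    intro a b hab
    rcases lt_trichotomy (w⁻¹ a) (w⁻¹ b) with h | h | h
    · exact h
    · exact absurd (w⁻¹.injective (le_antisymm h.le h.ge)) (by intro hh; rw [hh] at hab; exact lt_irrefl _ hab)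
    · have := hmono h
      simp only [Equiv.Perm.inv_def, Equiv.apply_symm_apply] at this
      exact absurd hab (not_lt.2 this.le)
  apply hw
  ext a
  have h1 := hle w hmono a
  have h2 := hle w⁻¹ hinvmono (w a)
  simp only [Equiv.Perm.inv_def, Equiv.symm_apply_apply] at h2
  have : (w a).1 = a.1 := le_antisymm h2 h1
  simpa [Fin.ext_iff] using this

lemma inv_mul_sTr_le (w : Equiv.Perm (Fin n)) (k : Fin (n-1)) :
    inv (w * sTr n k) ≤ inv w + 1 := by
  rcases lt_trichotomy (w (k0 k)) (w (k1 k)) with h | h | h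
  · rw [inv_mul_sTr_asc h]
  · exact absurd h (sTr_ne k)
  · have := inv_mul_sTr_desc h; omega

lemma inv_piW_le (l : List (Fin (n-1))) : inv (piW n l) ≤ l.length := by
  induction l using List.reverseRecOn with
  | nil => simp [piW, inv_one]
  | append_singleton l k ih =>
    rw [piW_append]
    have := inv_mul_sTr_le (piW n l) k
    simp only [List.length_append, List.length_singleton]
    omega

lemma exists_word (w : Equiv.Perm (Fin n)) : ∃ l, piW n l = w ∧ l.length = inv w := by
  generalize hN : inv w = N
  induction N generalizing w with
  | zero =>
    have hw : w = 1 := by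
      by_contra hw
      obtain ⟨k, hk⟩ := exists_descent hw
      have h1 : (k0 k, k1 k) ∈ I w := mem_I.2 ⟨k0_lt_k1 k, hk⟩
      have : 0 < inv w := Finset.card_pos.2 ⟨_, h1⟩
      omega
    exact ⟨[], by simp [piW, hw], by simp⟩
  | succ N ih =>
    have hw : w ≠ 1 := by
      intro h; rw [h, inv_one] at hN; omega
    obtain ⟨k, hk⟩ := exists_descent hw
    have hd := inv_mul_sTr_desc hk
    obtain ⟨l, hl1, hl2⟩ := ih (w * sTr n k) (by omega)
    refine ⟨l ++ [k], ?_, ?_⟩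
    · rw [piW_append, hl1, mul_assoc, sTr_mul_self, mul_one]
    · simp only [List.length_append, List.length_singleton]; omega


lemma red_concat {l : List (Fin (n-1))} {k : Fin (n-1)}
    (h : inv (piW n (l ++ [k])) = l.length + 1) :
    inv (piW n l) = l.length ∧ piW n l (k0 k) < piW n l (k1 k) := by
  rw [piW_append] at h
  have h1 := inv_piW_le l
  have h2 := inv_mul_sTr_le (piW n l) k
  rcases lt_trichotomy (piW n l (k0 k)) (piW n l (k1 k)) with hc | hc | hc
  · rw [inv_mul_sTr_asc hc] at h
    exact ⟨by omega, hc⟩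
  · exact absurd hc (sTr_ne k)
  · have := inv_mul_sTr_desc hc
    omega

lemma dom_of_sublist : ∀ (b c : List (Fin (n-1))), List.Sublist c b →
    inv (piW n b) = b.length → inv (piW n c) = c.length →
    dom (piW n c) (piW n b) := by
  intro b
  induction b using List.reverseRecOn with
  | nil =>
    intro c hc _ _
    rw [List.sublist_nil.1 hc]
    exact dom_refl _
  | append_singleton l k ih =>
    intro c hc hb hcred
    rw [List.length_append, List.length_singleton] at hb
    obtain ⟨hlred, hasc⟩ := red_concat hb
    have hstep : dom (piW n l) (piW n (l ++ [k])) := by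
      rw [piW_append]; exact dom_mul_self hasc
    rw [List.sublist_append_iff] at hc
    obtain ⟨c1, c2, rfl, hc1, hc2⟩ := hc
    rcases List.sublist_singleton.1 hc2 with rfl | rfl
    · rw [List.append_nil] at hcred ⊢
      exact dom_trans (ih c1 hc1 hlred hcred) hstep
    · rw [List.length_append, List.length_singleton] at hcred
      obtain ⟨hc1red, hcasc⟩ := red_concat hcred
      rw [piW_append, piW_append]
      exact dom_lift_asc (ih c1 hc1 hlred hc1red) hasc

lemma card_filter_lt_val {i : ℕ} (hi : i ≤ n) :
    (Finset.univ.filter (fun a : Fin n => a.1 < i)).card = i := by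
  have key : (Finset.univ.filter (fun a : Fin n => a.1 < i)).card = (Finset.range i).card := by
    apply Finset.card_bij' (fun (a : Fin n) _ => a.1)
        (fun (m : ℕ) hm => (⟨m, by
          rw [Finset.mem_range] at hm; omega⟩ : Fin n))
        <;> intro a ha <;> simp_all [Finset.mem_range] <;> exact Finset.mem_range.mp ha
  rw [key, Finset.card_range]

lemma dom_one {w : Equiv.Perm (Fin n)} (h : dom w 1) : w = 1 := by
  have key2 : ∀ a : Fin n, (w a).1 ≤ a.1 := by
    intro a
    have hi : a.1 + 1 ≤ n := a.isLt
    have h1 := h (a.1+1) (a.1+1)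
    have e1 : rk (1 : Equiv.Perm (Fin n)) (a.1+1) (a.1+1) = a.1 + 1 := by
      unfold rk
      simp only [Equiv.Perm.one_apply, and_self]
      exact card_filter_lt_val hi
    have hsub : (Finset.univ.filter (fun b : Fin n => b.1 < a.1+1 ∧ (w b).1 < a.1+1))
        ⊆ (Finset.univ.filter (fun b : Fin n => b.1 < a.1+1)) := by
      intro b hb
      rw [Finset.mem_filter] at hb ⊢
      exact ⟨hb.1, hb.2.1⟩
    have heq := Finset.eq_of_subset_of_card_le hsub (by
      rw [card_filter_lt_val hi]
      rw [e1] at h1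
      exact h1)
    have hmem : a ∈ Finset.univ.filter (fun b : Fin n => b.1 < a.1+1) := by
      simp
    rw [← heq, Finset.mem_filter] at hmem
    omega
  have key : ∀ m : ℕ, ∀ a : Fin n, a.1 = m → w a = a := by
    intro m
    induction m using Nat.strong_induction_on with
    | _ m ih =>
      intro a ha
      rcases lt_or_eq_of_le (key2 a) with hlt | heq
      · have := ih (w a).1 (by omega) (w a) rfl
        have := w.injective this
        rw [this] at hlt
        omega
      · exact Fin.ext heq
  ext a
  exact congrArg Fin.val (key a.1 a rfl)

lemma inv_lt_of_dom : ∀ N : ℕ, ∀ u w : Equiv.Perm (Fin n), inv u ≤ N → dom w u →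
    w = u ∨ inv w < inv u := by
  intro N
  induction N with
  | zero =>
    intro u w hu hd
    have hu1 : u = 1 := by
      by_contra hc
      obtain ⟨k, hk⟩ := exists_descent hc
      have : (k0 k, k1 k) ∈ I u := mem_I.2 ⟨k0_lt_k1 k, hk⟩
      have : 0 < inv u := Finset.card_pos.2 ⟨_, this⟩
      omega
    left
    rw [hu1] at hd ⊢
    exact dom_one hd
  | succ N ih =>
    intro u w hu hd
    by_cases hu1 : u = 1
    · left; rw [hu1] at hd ⊢; exact dom_one hd
    · obtain ⟨k, hk⟩ := exists_descent hu1
      have hus := inv_mul_sTr_desc hk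
      rcases lt_trichotomy (w (k0 k)) (w (k1 k)) with hw | hw | hw
      · have hd2 : dom w (u * sTr n k) := dom_lift_desc hd hk hw
        rcases ih (u * sTr n k) w (by omega) hd2 with heq | hlt
        · right; rw [heq]; omega
        · right; omega
      · exact absurd hw (sTr_ne k)
      · have hd2 : dom (w * sTr n k) (u * sTr n k) := dom_lift_desc2 hd hw
        have hws := inv_mul_sTr_desc hw
        rcases ih (u * sTr n k) (w * sTr n k) (by omega) hd2 with heq | hlt
        · left; exact mul_right_cancel heq
        · right; omega

def blk (P : Set (Fin (n-1))) (a : Fin n) : ℕ :=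
  (Finset.univ.filter (fun j : Fin (n-1) => j.1 < a.1 ∧ j ∉ P)).card

lemma blk_mono (P : Set (Fin (n-1))) {a b : Fin n} (h : a ≤ b) : blk P a ≤ blk P b := by
  apply Finset.card_le_card
  intro j hj
  rw [Finset.mem_filter] at hj ⊢
  have : a.1 ≤ b.1 := h
  exact ⟨hj.1, by omega, hj.2.2⟩

lemma blk_succ (P : Set (Fin (n-1))) (k : Fin (n-1)) :
    blk P (k1 k) = blk P (k0 k) + (if k ∈ P then 0 else 1) := by
  unfold blk k0 k1
  rw [Finset.card_filter, Finset.card_filter]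
  have : ∀ j : Fin (n-1), (if j.1 < k.1 + 1 ∧ j ∉ P then 1 else 0)
      = (if j.1 < k.1 ∧ j ∉ P then 1 else 0) + (if j = k then (if j ∉ P then 1 else 0) else 0) := by
    intro j
    have : j = k ↔ j.1 = k.1 := by simp [Fin.ext_iff]
    split_ifs <;> simp_all <;> omega
  rw [Finset.sum_congr rfl (fun j _ => this j), Finset.sum_add_distrib,
    Finset.sum_ite_eq' Finset.univ k]
  simp only [Finset.mem_univ, if_true]
  split_ifs <;> simp

lemma mem_P_of_blk_eq {P : Set (Fin (n-1))} {k : Fin (n-1)}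
    (h : blk P (k0 k) = blk P (k1 k)) : k ∈ P := by
  have := blk_succ P k
  split_ifs at this with hk
  · exact hk
  · omega

lemma blk_eq_of_mem_P {P : Set (Fin (n-1))} {k : Fin (n-1)} (hk : k ∈ P) :
    blk P (k1 k) = blk P (k0 k) := by
  rw [blk_succ P k, if_pos hk]
  omega

lemma blk_sTr {P : Set (Fin (n-1))} {k : Fin (n-1)} (hk : k ∈ P) (a : Fin n) :
    blk P (sTr n k a) = blk P a := by
  by_cases h0 : a = k0 k
  · rw [h0, sTr_k0, blk_eq_of_mem_P hk]
  · by_cases h1 : a = k1 k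
    · rw [h1, sTr_k1, blk_eq_of_mem_P hk]
    · rw [sTr_apply_of_ne k a h0 h1]

def KeepsBlk (P : Set (Fin (n-1))) (w : Equiv.Perm (Fin n)) : Prop :=
  ∀ a : Fin n, blk P (w a) = blk P a

lemma wpar_keeps {P : Set (Fin (n-1))} {w : Equiv.Perm (Fin n)} (h : w ∈ WPar n P) :
    KeepsBlk P w := by
  induction h using Subgroup.closure_induction with
  | mem x hx =>
    obtain ⟨k, hk, rfl⟩ := hx
    exact fun a => blk_sTr hk a
  | one => intro a; rfl
  | mul x y _ _ hx hy =>
    intro a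
    rw [Equiv.Perm.mul_apply, hx, hy]
  | inv x _ hx =>
    intro a
    have := hx (x⁻¹ a)
    rw [Equiv.Perm.inv_def, Equiv.apply_symm_apply] at this
    exact this.symm

lemma keeps_blk_mul {P : Set (Fin (n-1))} {w : Equiv.Perm (Fin n)} {k : Fin (n-1)}
    (hw : KeepsBlk P w) (hk : k ∈ P) : KeepsBlk P (w * sTr n k) := by
  intro a
  rw [Equiv.Perm.mul_apply, hw, blk_sTr hk]

lemma descent_mem_P {P : Set (Fin (n-1))} {w : Equiv.Perm (Fin n)} {k : Fin (n-1)}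
    (hw : KeepsBlk P w) (hk : w (k1 k) < w (k0 k)) : k ∈ P := by
  apply mem_P_of_blk_eq (P := P) (k := k)
  have h1 : blk P (k0 k) ≤ blk P (k1 k) := blk_mono P (k0_lt_k1 k).le
  have h2 : blk P (w (k1 k)) ≤ blk P (w (k0 k)) := blk_mono P hk.le
  rw [hw, hw] at h2
  omega

lemma keeps_mem_wpar {P : Set (Fin (n-1))} : ∀ N : ℕ, ∀ w : Equiv.Perm (Fin n),
    inv w ≤ N → KeepsBlk P w → w ∈ WPar n P := by
  intro N
  induction N with
  | zero =>
    intro w hw _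
    have : w = 1 := by
      by_contra hc
      obtain ⟨k, hk⟩ := exists_descent hc
      have : (k0 k, k1 k) ∈ I w := mem_I.2 ⟨k0_lt_k1 k, hk⟩
      have : 0 < inv w := Finset.card_pos.2 ⟨_, this⟩
      omega
    rw [this]; exact one_mem _
  | succ N ih =>
    intro w hw hkb
    by_cases hw1 : w = 1
    · rw [hw1]; exact one_mem _
    · obtain ⟨k, hk⟩ := exists_descent hw1
      have hkP : k ∈ P := descent_mem_P hkb hk
      have h1 := inv_mul_sTr_desc hk
      have h2 : w * sTr n k ∈ WPar n P := ih _ (by omega) (keeps_blk_mul hkb hkP)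
      have h3 : sTr n k ∈ WPar n P := Subgroup.subset_closure ⟨k, hkP, rfl⟩
      have : w = (w * sTr n k) * sTr n k := by
        rw [mul_assoc, sTr_mul_self, mul_one]
      rw [this]
      exact mul_mem h2 h3

lemma len_eq_inv (w : Equiv.Perm (Fin n)) : len n w = inv w := by
  have hmem : inv w ∈ {m | ∃ l : List (Fin (n-1)), l.length = m ∧ (l.map (sTr n)).prod = w} := by
    obtain ⟨l, h1, h2⟩ := exists_word w
    exact ⟨l, h2, h1⟩
  apply le_antisymm
  · exact Nat.sInf_le hmem
  · have h := Nat.sInf_mem (⟨_, hmem⟩ :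
      {m | ∃ l : List (Fin (n-1)), l.length = m ∧ (l.map (sTr n)).prod = w}.Nonempty)
    obtain ⟨l, hl1, hl2⟩ := h
    have h2 := inv_piW_le (n := n) l
    rw [show piW n l = w from hl2] at h2
    have h3 : l.length = len n w := hl1
    omega

lemma minReps_asc {P : Set (Fin (n-1))} {v : Equiv.Perm (Fin n)} (hv : v ∈ minReps n P)
    {k : Fin (n-1)} (hk : k ∈ P) : v (k0 k) < v (k1 k) := by
  have h3 : sTr n k ∈ WPar n P := Subgroup.subset_closure ⟨k, hk, rfl⟩
  have h := hv _ h3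
  rw [len_eq_inv, len_eq_inv] at h
  rcases lt_trichotomy (v (k0 k)) (v (k1 k)) with hc | hc | hc
  · exact hc
  · exact absurd hc (sTr_ne k)
  · have := inv_mul_sTr_desc hc
    omega

lemma block_mono {P : Set (Fin (n-1))} {v : Equiv.Perm (Fin n)}
    (hvP : ∀ k : Fin (n-1), k ∈ P → v (k0 k) < v (k1 k)) :
    ∀ d : ℕ, ∀ a b : Fin n, a.1 + d = b.1 → 0 < d → blk P a = blk P b → v a < v b := by
  intro d
  induction d with
  | zero => omega
  | succ d ih =>
    intro a b hab _ hblk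
    have hk : a.1 < n - 1 := by have := b.isLt; omega
    set k : Fin (n-1) := ⟨a.1, hk⟩ with hkdef
    have ha : a = k0 k := Fin.ext rfl
    have hmid : blk P (k0 k) = blk P (k1 k) := by
      have hm1 : blk P a ≤ blk P (k1 k) := by
        rw [ha]; exact blk_mono P (k0_lt_k1 k).le
      have hm2 : blk P (k1 k) ≤ blk P b := by
        apply blk_mono P
        show (k1 k).1 ≤ b.1
        show a.1 + 1 ≤ b.1
        omega
      rw [← ha]; omega
    have hkP : k ∈ P := mem_P_of_blk_eq hmid
    have hstep : v a < v (k1 k) := by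
      rw [ha]; exact hvP k hkP
    rcases Nat.eq_zero_or_pos d with hd | hd
    · have hb : b = k1 k := by
        apply Fin.ext
        show b.1 = a.1 + 1
        omega
      rw [hb]; exact hstep
    · have hblk2 : blk P (k1 k) = blk P b := by rw [← hmid, ← ha]; exact hblk
      exact hstep.trans (ih (k1 k) b (by show a.1 + 1 + d = b.1; omega) hd hblk2)

lemma dom_parab {P : Set (Fin (n-1))} {v v' : Equiv.Perm (Fin n)}
    (hvP : ∀ k : Fin (n-1), k ∈ P → v (k0 k) < v (k1 k))
    (hv'P : ∀ k : Fin (n-1), k ∈ P → v' (k0 k) < v' (k1 k)) :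
    ∀ N : ℕ, ∀ w' : Equiv.Perm (Fin n), inv w' ≤ N → KeepsBlk P w' →
      dom v (v' * w') → dom v v' := by
  intro N
  induction N with
  | zero =>
    intro w' hw' _ hd
    have : w' = 1 := by
      by_contra hc
      obtain ⟨k, hk⟩ := exists_descent hc
      have : (k0 k, k1 k) ∈ I w' := mem_I.2 ⟨k0_lt_k1 k, hk⟩
      have : 0 < inv w' := Finset.card_pos.2 ⟨_, this⟩
      omega
    rwa [this, mul_one] at hd
  | succ N ih =>
    intro w' hw' hkb hd
    by_cases hw1 : w' = 1
    · rwa [hw1, mul_one] at hd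
    · obtain ⟨k, hk⟩ := exists_descent hw1
      have hkP : k ∈ P := descent_mem_P hkb hk
      have hudesc : (v' * w') (k1 k) < (v' * w') (k0 k) := by
        simp only [Equiv.Perm.mul_apply]
        have hblk : blk P (w' (k1 k)) = blk P (w' (k0 k)) := by
          rw [hkb, hkb]
          exact blk_eq_of_mem_P hkP
        exact block_mono hv'P ((w' (k0 k)).1 - (w' (k1 k)).1) _ _ (by have := fin_lt_val hk; omega)
          (by have := fin_lt_val hk; omega) hblk
      have hd2 : dom v ((v' * w') * sTr n k) := dom_lift_desc hd hudesc (hvP k hkP)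
      rw [mul_assoc] at hd2
      have h1 := inv_mul_sTr_desc hk
      exact ih _ (by omega) (keeps_blk_mul hkb hkP) hd2

end BAux

/-- Fix `P ⊆ {1, …, n-1}`. If `v, v\' ∈ W^P` with `v ≠ v\'` and
`ℓ(v) ≥ ℓ(v\')`, then `σ_v(v\'w\') = 0` for every `w\' ∈ W_P`. Consequently every entry
`σ_v(v\'w\')·σ_w(v\'w\')` of the corresponding block of the matrix `A` vanishes, so `A`
(with rows and columns ordered lexicographically subordinate to the length partial order)
is block upper triangular with blocks indexed by pairs `(v, v\') ∈ W^P × W^P`. -/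
theorem billey_block_upper_triangular (n : ℕ) (hn : 2 ≤ n) (P : Set (Fin (n - 1)))
    (v v' : Equiv.Perm (Fin n)) (hv : v ∈ minReps n P) (hv' : v' ∈ minReps n P)
    (hne : v ≠ v') (hlen : len n v' ≤ len n v) :
    (∀ w' ∈ WPar n P, sigma n v (v' * w') = 0) ∧
      ∀ w ∈ WPar n P, ∀ w' ∈ WPar n P,
        sigma n v (v' * w') * sigma n w (v' * w') = 0 := by
  have key : ∀ w' ∈ WPar n P, sigma n v (v' * w') = 0 := by
    intro w' hw'
    have hex : ∃ b : List (Fin (n - 1)), IsRedWord n b (v' * w') := by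
      obtain ⟨l, h1, h2⟩ := BAux.exists_word (v' * w')
      exact ⟨l, h1, by rw [h2, BAux.len_eq_inv]⟩
    rw [sigma, dif_pos hex]
    set b := hex.choose with hbdef
    have hb : IsRedWord n b (v' * w') := hex.choose_spec
    rw [billeyWord]
    have hempty : (Finset.univ.filter (fun J : Finset (Fin b.length) =>
        J.card = len n v ∧
          ((J.sort (· ≤ ·)).map (fun j => sTr n (b.get j))).prod = v)) = ∅ := by
      rw [Finset.filter_eq_empty_iff]
      rintro J - ⟨hcard, hprod⟩
      set c : List (Fin (n-1)) := (J.sort (· ≤ ·)).map b.get with hcdef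
      have hclen : c.length = (J.sort (· ≤ ·)).length := List.length_map _
      have hsub : List.Sublist c b := by
        rw [List.sublist_iff_exists_fin_orderEmbedding_get_eq]
        refine ⟨OrderEmbedding.ofStrictMono
          (fun i => (J.sort (· ≤ ·)).get (Fin.cast hclen i)) ?_, ?_⟩
        · intro i i' hii
          exact (J.sortedLT_sort).strictMono_get hii
        · intro ix
          show c.get ix = b.get ((J.sort (· ≤ ·)).get (Fin.cast hclen ix))
          simp [hcdef, List.get_eq_getElem, List.getElem_map]
      have hcprod : BAux.piW n c = v := by
        rw [BAux.piW, hcdef, List.map_map]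
        exact hprod
      have hcred : BAux.inv (BAux.piW n c) = c.length := by
        rw [hcprod, hclen, Finset.length_sort, hcard, BAux.len_eq_inv]
      have hbred : BAux.inv (BAux.piW n b) = b.length := by
        rw [show BAux.piW n b = v' * w' from hb.1, hb.2, BAux.len_eq_inv]
      have hdom : BAux.dom v (v' * w') := by
        have := BAux.dom_of_sublist b c hsub hbred hcred
        rwa [hcprod, show BAux.piW n b = v' * w' from hb.1] at this
      have hdom2 : BAux.dom v v' :=
        BAux.dom_parab (fun k hk => BAux.minReps_asc hv hk)
          (fun k hk => BAux.minReps_asc hv' hk) (BAux.inv w') w' le_rfl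
          (BAux.wpar_keeps hw') hdom
      rcases BAux.inv_lt_of_dom (BAux.inv v') v' v le_rfl hdom2 with heq | hlt
      · exact hne heq
      · rw [BAux.len_eq_inv, BAux.len_eq_inv] at hlen
        omega
    rw [hempty, Finset.sum_empty]
  exact ⟨key, fun w _ w' hw' => by rw [key w' hw', zero_mul]⟩

end
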